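/- Let d₁ > κ ≥ 1 with d₁ ≥ … ≥ d_N > 0 and G₁(u) = Σ_{i=1}^N (|min(κu, max(d_i, max(1,u))) - d_i|)². Then G₁ is strictly decreasing on [1/κ, 1) and strictly increasing on (d₁, ∞); hence every minimizer of G₁ over [1/κ, ∞) lies in [1, d₁]. -/
import Mathlib


/-- Case `d₁ > κ`: `G₁` is strictly decreasing on `[1/κ, 1)`, strictly increasing
on `(d₁, ∞)`, and every minimizer over `[1/κ, ∞)` lies in `[1, d₁]`. -/
theorem G1_minimizer_localization (N : ℕ) (hN : 0 < N) (d : ℕ → ℝ) (κ : ℝ)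
    (hdpos : ∀ i < N, 0 < d i)
    (hdec : ∀ i j, i ≤ j → j < N → d j ≤ d i)
    (hκ : 1 ≤ κ) (hd1 : κ < d 0)
    (G : ℝ → ℝ)
    (hG : ∀ u, G u = ∑ i ∈ Finset.range N,
      (|min (κ * u) (max (d i) (max 1 u)) - d i|) ^ 2) :
    StrictAntiOn G (Set.Ico (1 / κ) 1) ∧
    StrictMonoOn G (Set.Ioi (d 0)) ∧
    (∀ u ∈ Set.Ici (1 / κ), (∀ v ∈ Set.Ici (1 / κ), G u ≤ G v) →
      u ∈ Set.Icc 1 (d 0)) := by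
  have hκ0 : (0:ℝ) < κ := lt_of_lt_of_le one_pos hκ
  have hanti : StrictAntiOn G (Set.Ico (1 / κ) 1) := by
    intro u hu v hv huv
    obtain ⟨hu1, hu2⟩ := hu
    obtain ⟨hv1, hv2⟩ := hv
    have hmu : max 1 u = 1 := max_eq_left hu2.le
    have hmv : max 1 v = 1 := max_eq_left hv2.le
    have hk1u : 1 ≤ κ * u := by
      rw [mul_comm]; exact (div_le_iff₀ hκ0).mp hu1
    have hk1v : 1 ≤ κ * v := by
      rw [mul_comm]; exact (div_le_iff₀ hκ0).mp hv1
    have hkuv : κ * u < κ * v := by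
      exact mul_lt_mul_of_pos_left huv hκ0
    rw [hG, hG]
    apply Finset.sum_lt_sum
    · intro i _
      rw [hmu, hmv]
      apply pow_le_pow_left₀ (abs_nonneg _)
      rcases le_or_gt (d i) 1 with hdi | hdi
      · have h1 : max (d i) 1 = 1 := max_eq_right hdi
        rw [h1, min_eq_right hk1u, min_eq_right hk1v]
      · have h1 : max (d i) 1 = d i := max_eq_left hdi.le
        rw [h1]
        have hau : min (κ * u) (d i) ≤ d i := min_le_right _ _
        have hav : min (κ * v) (d i) ≤ d i := min_le_right _ _
        have hab : min (κ * u) (d i) ≤ min (κ * v) (d i) :=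
          min_le_min hkuv.le le_rfl
        rw [abs_of_nonpos (by linarith), abs_of_nonpos (by linarith)]
        linarith
    · refine ⟨0, Finset.mem_range.mpr hN, ?_⟩
      rw [hmu, hmv]
      have h1 : max (d 0) 1 = d 0 := max_eq_left (by linarith)
      have hku : κ * u < d 0 := by nlinarith
      have hkv : κ * v < d 0 := by nlinarith
      rw [h1, min_eq_left hku.le, min_eq_left hkv.le,
        abs_of_nonpos (by linarith), abs_of_nonpos (by linarith)]
      apply pow_lt_pow_left₀ (by linarith) (by linarith) two_ne_zero
  have hmono : StrictMonoOn G (Set.Ioi (d 0)) := by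
    intro u hu v hv huv
    simp only [Set.mem_Ioi] at hu hv
    have hu1 : 1 < u := by linarith
    have hv1 : 1 < v := by linarith
    rw [hG, hG]
    apply Finset.sum_lt_sum_of_nonempty (Finset.nonempty_range_iff.mpr hN.ne')
    intro i hi
    have hdi : d i ≤ d 0 := hdec 0 i (Nat.zero_le i) (Finset.mem_range.mp hi)
    have h1u : max 1 u = u := max_eq_right hu1.le
    have h1v : max 1 v = v := max_eq_right hv1.le
    have h2u : max (d i) u = u := max_eq_right (by linarith)
    have h2v : max (d i) v = v := max_eq_right (by linarith)
    have h3u : min (κ * u) u = u := min_eq_right (by nlinarith)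
    have h3v : min (κ * v) v = v := min_eq_right (by nlinarith)
    rw [h1u, h1v, h2u, h2v, h3u, h3v,
      abs_of_nonneg (by linarith), abs_of_nonneg (by linarith)]
    apply pow_lt_pow_left₀ (by linarith) (by linarith) two_ne_zero
  refine ⟨hanti, hmono, ?_⟩
  intro u hu hmin
  simp only [Set.mem_Ici] at hu
  have hκinv : 1 / κ ≤ 1 := by
    rw [div_le_one hκ0]; exact hκ
  constructor
  · by_contra h
    push_neg at h
    set v := (u + 1) / 2 with hv
    have huv : u < v := by rw [hv]; linarith
    have hv1 : v < 1 := by rw [hv]; linarith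
    have hvmem : v ∈ Set.Ico (1 / κ) 1 := ⟨by linarith, hv1⟩
    have := hanti ⟨hu, h⟩ hvmem huv
    have := hmin v (by simpa using hvmem.1)
    linarith
  · by_contra h
    push_neg at h
    set v := (d 0 + u) / 2 with hv
    have hvu : v < u := by rw [hv]; linarith
    have hvd : d 0 < v := by rw [hv]; linarith
    have := hmono (Set.mem_Ioi.mpr hvd) (Set.mem_Ioi.mpr h) hvu
    have := hmin v (by simp only [Set.mem_Ici]; linarith)
    linarith
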